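/- (Theorem 7) Suppose for target p* ∈ ∏_i (0,P_i] there exist two users i, j with p_i*, p_j* below their maxima such that the pairs (α_0^i, α_0^j) and (P_0^i, P_0^j) each satisfy: either the first entry equals the maximum over users and strictly exceeds the second, or both are strictly below the maximum, where α_0^k = (Σ_{l≠k} h_kl p_l* + n_k)/(h_{0k} p_k* h_{k0}) and P_0^k = (P_k − p_k*)(Σ_{l≠k} h_kl p_l* + n_k)/(p_k* h_{k0}). Then for any aggregate-power intervention rule f sustaining p* and for any ε > 0, there exists a profile \tilde p ≠ p* with \tilde p ∈ E(f), Σ_k h_{0k} \tilde p_k = Σ_k h_{0k} p_k*, and |\tilde p − p*| < ε. In particular, p* cannot be strongly sustained by any aggregate-power first-order intervention rule. -/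

import Mathlib

open Finset

/-- First-order intervention rule based on aggregate receive power:
`f(p) = [α₀ |∑ i, g_i p_i − p_A*|]₀^{P₀}` with `p_A* = ∑ i, g_i p_i*`,
where `g i = h_{0i}` is the gain from user `i` to the intervention device's
receiver (the expression inside is nonnegative, so the lower truncation is
inactive). -/
noncomputable def intvA {N : ℕ} (α0 : ℝ) (g pstar : Fin N → ℝ) (P0 : ℝ)
    (p : Fin N → ℝ) : ℝ :=
  min (α0 * |∑ i, g i * p i - ∑ i, g i * pstar i|) P0

/-- SINR of user `i` under the aggregate-power intervention rule. -/
noncomputable def sinrA {N : ℕ} (h : Fin N → Fin N → ℝ) (h0 n g : Fin N → ℝ)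
    (α0 : ℝ) (pstar : Fin N → ℝ) (P0 : ℝ) (i : Fin N) (p : Fin N → ℝ) : ℝ :=
  h i i * p i /
    (h0 i * intvA α0 g pstar P0 p + ∑ j ∈ univ.erase i, h i j * p j + n i)

/-- `p` is a Nash equilibrium: no user can improve its payoff by a unilateral
deviation within `[0, Pmax i]`. -/
def isNE {N : ℕ} (Pmax : Fin N → ℝ) (payoff : Fin N → (Fin N → ℝ) → ℝ)
    (p : Fin N → ℝ) : Prop :=
  ∀ i, ∀ q, 0 ≤ q → q ≤ Pmax i →
    payoff i (Function.update p i q) ≤ payoff i p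

private lemma sum_update_diff {N : ℕ} (g p : Fin N → ℝ) (k : Fin N) (q : ℝ) :
    ∑ l, g l * Function.update p k q l = (∑ l, g l * p l) + g k * (q - p k) := by
  have h1 : ∑ l, (g l * Function.update p k q l - g l * p l)
      = ∑ l, (if l = k then g k * (q - p k) else 0) := by
    refine Finset.sum_congr rfl fun l _ => ?_
    by_cases hl : l = k
    · subst hl; simp [Function.update_self]; ring
    · simp [Function.update_of_ne hl, hl]
  rw [Finset.sum_sub_distrib, Finset.sum_ite_eq' univ k] at h1
  simp only [mem_univ, if_true] at h1
  linarith

private lemma erase_sum_update {N : ℕ} (h : Fin N → Fin N → ℝ) (p : Fin N → ℝ)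
    (k : Fin N) (q : ℝ) :
    ∑ l ∈ univ.erase k, h k l * Function.update p k q l
      = ∑ l ∈ univ.erase k, h k l * p l :=
  Finset.sum_congr rfl fun l hl => by
    rw [Function.update_of_ne (Finset.mem_erase.mp hl).1]

private lemma sinr_self {N : ℕ} (h : Fin N → Fin N → ℝ) (h0 n g : Fin N → ℝ)
    (α0 : ℝ) (pstar : Fin N → ℝ) (P0 : ℝ) (hP0 : 0 ≤ P0) (p : Fin N → ℝ)
    (hagg : ∑ l, g l * p l = ∑ l, g l * pstar l) (k : Fin N) :
    sinrA h h0 n g α0 pstar P0 k p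
      = h k k * p k / (∑ l ∈ univ.erase k, h k l * p l + n k) := by
  unfold sinrA intvA
  rw [hagg]
  simp [min_eq_left hP0]

private lemma sinr_update {N : ℕ} (h : Fin N → Fin N → ℝ) (h0 n g : Fin N → ℝ)
    (α0 : ℝ) (pstar : Fin N → ℝ) (P0 : ℝ) (p : Fin N → ℝ)
    (hagg : ∑ l, g l * p l = ∑ l, g l * pstar l) (k : Fin N) (q : ℝ) :
    sinrA h h0 n g α0 pstar P0 k (Function.update p k q)
      = h k k * q / (h0 k * min (α0 * |g k * (q - p k)|) P0
          + (∑ l ∈ univ.erase k, h k l * p l + n k)) := by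
  unfold sinrA intvA
  rw [sum_update_diff g p k q, hagg, erase_sum_update, Function.update_self]
  have h2 : (∑ l, g l * pstar l) + g k * (q - p k) - ∑ l, g l * pstar l
      = g k * (q - p k) := by ring
  rw [h2, add_assoc]

private lemma isNE_of_conds {N : ℕ} (h : Fin N → Fin N → ℝ)
    (h0 n g Pmax pstar : Fin N → ℝ)
    (hh : ∀ i j, 0 < h i j) (hh0 : ∀ i, 0 < h0 i) (hg : ∀ i, 0 < g i)
    (hn : ∀ i, 0 < n i) (α0 P0 : ℝ) (hα : 0 ≤ α0) (hP0 : 0 < P0)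
    (p : Fin N → ℝ) (hp0 : ∀ k, 0 ≤ p k)
    (hagg : ∑ l, g l * p l = ∑ l, g l * pstar l)
    (hFA : ∀ k, p k < Pmax k →
      (∑ l ∈ univ.erase k, h k l * p l + n k) ≤ α0 * (g k * h0 k * p k))
    (hFB : ∀ k, p k < Pmax k →
      (Pmax k - p k) * (∑ l ∈ univ.erase k, h k l * p l + n k)
        ≤ P0 * (h0 k * p k)) :
    isNE Pmax (sinrA h h0 n g α0 pstar P0) p := by
  intro k q hq0 hqP
  have hE0 : 0 ≤ ∑ l ∈ univ.erase k, h k l * p l :=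
    Finset.sum_nonneg fun l _ => mul_nonneg (hh k l).le (hp0 l)
  have hEpos : 0 < ∑ l ∈ univ.erase k, h k l * p l + n k := by
    linarith [hn k]
  rw [sinr_update h h0 n g α0 pstar P0 p hagg k q,
    sinr_self h h0 n g α0 pstar P0 hP0.le p hagg k]
  set E := ∑ l ∈ univ.erase k, h k l * p l + n k with hEdef
  set m := min (α0 * |g k * (q - p k)|) P0 with hm
  have hm0 : 0 ≤ m := le_min (mul_nonneg hα (abs_nonneg _)) hP0.le
  have hden : 0 < h0 k * m + E := by
    have := mul_nonneg (hh0 k).le hm0; linarith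
  rw [div_le_div_iff₀ hden hEpos]
  have hkk := (hh k k).le
  rcases le_or_gt q (p k) with hle | hlt
  · have h1 : q * E ≤ p k * (h0 k * m + E) := by
      have h2 : q * E ≤ p k * E := mul_le_mul_of_nonneg_right hle hEpos.le
      nlinarith [mul_nonneg (mul_nonneg (hh0 k).le hm0) (hp0 k)]
    nlinarith [mul_le_mul_of_nonneg_left h1 hkk]
  · have hkPm : p k < Pmax k := lt_of_lt_of_le hlt hqP
    have hFA' := hFA k hkPm
    have hFB' := hFB k hkPm
    have habs : |g k * (q - p k)| = g k * (q - p k) :=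
      abs_of_nonneg (mul_nonneg (hg k).le (by linarith))
    have hstep : (q - p k) * E ≤ p k * (h0 k * m) := by
      rcases le_total (α0 * |g k * (q - p k)|) P0 with hc | hc
      · rw [hm, min_eq_left hc, habs]
        have h3 := mul_le_mul_of_nonneg_left hFA' (by linarith : (0:ℝ) ≤ q - p k)
        nlinarith
      · rw [hm, min_eq_right hc]
        have h2 : (q - p k) * E ≤ (Pmax k - p k) * E :=
          mul_le_mul_of_nonneg_right (by linarith) hEpos.le
        nlinarith
    have h1 : q * E ≤ p k * (h0 k * m + E) := by nlinarith
    nlinarith [mul_le_mul_of_nonneg_left h1 hkk]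

private lemma conds_of_isNE {N : ℕ} (h : Fin N → Fin N → ℝ)
    (h0 n g Pmax pstar : Fin N → ℝ)
    (hh : ∀ i j, 0 < h i j) (hh0 : ∀ i, 0 < h0 i) (hg : ∀ i, 0 < g i)
    (hn : ∀ i, 0 < n i) (hp1 : ∀ i, 0 < pstar i)
    (α0 P0 : ℝ) (hα : 0 ≤ α0) (hP0 : 0 < P0)
    (hNE : isNE Pmax (sinrA h h0 n g α0 pstar P0) pstar)
    (k : Fin N) (hk : pstar k < Pmax k) :
    (∑ l ∈ univ.erase k, h k l * pstar l + n k) ≤ α0 * (g k * h0 k * pstar k) ∧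
    (Pmax k - pstar k) * (∑ l ∈ univ.erase k, h k l * pstar l + n k)
      ≤ P0 * (h0 k * pstar k) := by
  have hE0 : 0 ≤ ∑ l ∈ univ.erase k, h k l * pstar l :=
    Finset.sum_nonneg fun l _ => mul_nonneg (hh k l).le (hp1 l).le
  have hEpos : 0 < ∑ l ∈ univ.erase k, h k l * pstar l + n k := by
    linarith [hn k]
  set E := ∑ l ∈ univ.erase k, h k l * pstar l + n k with hEdef
  constructor
  · set Δ := min (Pmax k - pstar k) (P0 / (1 + α0 * g k)) with hΔ
    have hden1 : (0:ℝ) < 1 + α0 * g k := by nlinarith [mul_nonneg hα (hg k).le]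
    have hΔpos : 0 < Δ := lt_min (by linarith) (div_pos hP0 hden1)
    have hq0 : (0:ℝ) ≤ pstar k + Δ := by linarith [hp1 k]
    have hqP : pstar k + Δ ≤ Pmax k := by
      have := min_le_left (Pmax k - pstar k) (P0 / (1 + α0 * g k)); linarith
    have hineq := hNE k (pstar k + Δ) hq0 hqP
    rw [sinr_update h h0 n g α0 pstar P0 pstar rfl k (pstar k + Δ),
      sinr_self h h0 n g α0 pstar P0 hP0.le pstar rfl k] at hineq
    have habs : |g k * (pstar k + Δ - pstar k)| = g k * Δ := by
      rw [show pstar k + Δ - pstar k = Δ by ring]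
      exact abs_of_nonneg (mul_nonneg (hg k).le hΔpos.le)
    have hmle : α0 * (g k * Δ) ≤ P0 := by
      have h5 : Δ ≤ P0 / (1 + α0 * g k) := min_le_right _ _
      have h6 : Δ * (1 + α0 * g k) ≤ P0 := (le_div_iff₀ hden1).mp h5
      nlinarith [mul_nonneg hα (hg k).le]
    rw [habs, min_eq_left hmle] at hineq
    have hden : 0 < h0 k * (α0 * (g k * Δ)) + E := by
      have := mul_nonneg (hh0 k).le (mul_nonneg hα (mul_nonneg (hg k).le hΔpos.le))
      linarith
    rw [div_le_div_iff₀ hden hEpos] at hineq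
    nlinarith [mul_pos (hh k k) hΔpos]
  · have hq0 : (0:ℝ) ≤ Pmax k := by linarith [hp1 k]
    have hineq := hNE k (Pmax k) hq0 le_rfl
    rw [sinr_update h h0 n g α0 pstar P0 pstar rfl k (Pmax k),
      sinr_self h h0 n g α0 pstar P0 hP0.le pstar rfl k] at hineq
    have habs : |g k * (Pmax k - pstar k)| = g k * (Pmax k - pstar k) :=
      abs_of_nonneg (mul_nonneg (hg k).le (by linarith))
    rw [habs] at hineq
    set m := min (α0 * (g k * (Pmax k - pstar k))) P0 with hm
    have hm0 : 0 ≤ m :=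
      le_min (mul_nonneg hα (mul_nonneg (hg k).le (by linarith))) hP0.le
    have hmP : m ≤ P0 := min_le_right _ _
    have hden : 0 < h0 k * m + E := by
      have := mul_nonneg (hh0 k).le hm0; linarith
    rw [div_le_div_iff₀ hden hEpos] at hineq
    have h8 : h k k * ((Pmax k - pstar k) * E) ≤ h k k * (pstar k * (h0 k * P0)) := by
      nlinarith [mul_le_mul_of_nonneg_left hmP
        (mul_nonneg (mul_nonneg (hh k k).le (hp1 k).le) (hh0 k).le)]
    have h9 := le_of_mul_le_mul_left h8 (hh k k)
    nlinarith

set_option maxHeartbeats 1000000 in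
/-- Theorem 7: under the stated condition on two users `i, j` (each of the pairs
`(α₀ⁱ, α₀ʲ)` and `(P₀ⁱ, P₀ʲ)` either has its first entry equal to the maximum over
users in `Ñ(p*)` and strictly above the second, or both entries strictly below the
maximum), any aggregate-power intervention rule sustaining `p*` also sustains, for
every `ε > 0`, some other profile `p̃ ≠ p*` with the same aggregate receive power
and `|p̃ − p*| < ε`. In particular `p*` cannot be strongly sustained. -/
theorem stmt16 (N : ℕ) (h : Fin N → Fin N → ℝ) (h0 n g Pmax pstar : Fin N → ℝ)
    (hh : ∀ i j, 0 < h i j) (hh0 : ∀ i, 0 < h0 i) (hg : ∀ i, 0 < g i)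
    (hn : ∀ i, 0 < n i)
    (hP : ∀ i, 0 < Pmax i) (hp1 : ∀ i, 0 < pstar i) (hp2 : ∀ i, pstar i ≤ Pmax i)
    (a b : Fin N → ℝ)
    (ha : ∀ k, a k = (∑ l ∈ univ.erase k, h k l * pstar l + n k) /
      (g k * pstar k * h0 k))
    (hb : ∀ k, b k = (Pmax k - pstar k) *
      (∑ l ∈ univ.erase k, h k l * pstar l + n k) / (pstar k * h0 k))
    (hij : ∃ i j : Fin N, i ≠ j ∧ pstar i < Pmax i ∧ pstar j < Pmax j ∧
      (((∀ k, pstar k < Pmax k → a k ≤ a i) ∧ a j < a i) ∨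
        ((∃ k, pstar k < Pmax k ∧ a i < a k) ∧ (∃ k, pstar k < Pmax k ∧ a j < a k))) ∧
      (((∀ k, pstar k < Pmax k → b k ≤ b i) ∧ b j < b i) ∨
        ((∃ k, pstar k < Pmax k ∧ b i < b k) ∧ (∃ k, pstar k < Pmax k ∧ b j < b k)))) :
    ∀ α0 P0 : ℝ, 0 ≤ α0 → 0 < P0 →
      isNE Pmax (sinrA h h0 n g α0 pstar P0) pstar →
      ∀ ε : ℝ, 0 < ε →
        ∃ pt : Fin N → ℝ, pt ≠ pstar ∧
          (∀ k, 0 ≤ pt k ∧ pt k ≤ Pmax k) ∧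
          isNE Pmax (sinrA h h0 n g α0 pstar P0) pt ∧
          (∑ k, g k * pt k) = (∑ k, g k * pstar k) ∧
          (∀ k, |pt k - pstar k| < ε) := by
  intro α0 P0 hα0 hP0 hNE ε hε
  obtain ⟨i, j, hijne, hiP, hjP, hacase, hbcase⟩ := hij
  have key : ∀ k, pstar k < Pmax k →
      (∑ l ∈ univ.erase k, h k l * pstar l + n k) ≤ α0 * (g k * h0 k * pstar k) ∧
      (Pmax k - pstar k) * (∑ l ∈ univ.erase k, h k l * pstar l + n k)
        ≤ P0 * (h0 k * pstar k) :=
    fun k hk => conds_of_isNE h h0 n g Pmax pstar hh hh0 hg hn hp1 α0 P0 hα0 hP0 hNE k hk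
  -- strict inequalities at j
  have haj : (∑ l ∈ univ.erase j, h j l * pstar l + n j)
      < α0 * (g j * pstar j * h0 j) := by
    obtain ⟨w, hw1, hw2⟩ : ∃ w, pstar w < Pmax w ∧ a j < a w := by
      rcases hacase with ⟨_, h2⟩ | ⟨_, ⟨k, hk1, hk2⟩⟩
      · exact ⟨i, hiP, h2⟩
      · exact ⟨k, hk1, hk2⟩
    have hposw : 0 < g w * pstar w * h0 w :=
      mul_pos (mul_pos (hg w) (hp1 w)) (hh0 w)
    have hw3 : a w ≤ α0 := by
      rw [ha w, div_le_iff₀ hposw]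
      nlinarith [(key w hw1).1]
    have h4 : a j < α0 := lt_of_lt_of_le hw2 hw3
    rw [ha j] at h4
    exact (div_lt_iff₀ (mul_pos (mul_pos (hg j) (hp1 j)) (hh0 j))).mp h4
  have hbj : (Pmax j - pstar j) * (∑ l ∈ univ.erase j, h j l * pstar l + n j)
      < P0 * (pstar j * h0 j) := by
    obtain ⟨w, hw1, hw2⟩ : ∃ w, pstar w < Pmax w ∧ b j < b w := by
      rcases hbcase with ⟨_, h2⟩ | ⟨_, ⟨k, hk1, hk2⟩⟩
      · exact ⟨i, hiP, h2⟩
      · exact ⟨k, hk1, hk2⟩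
    have hposw : 0 < pstar w * h0 w := mul_pos (hp1 w) (hh0 w)
    have hw3 : b w ≤ P0 := by
      rw [hb w, div_le_iff₀ hposw]
      nlinarith [(key w hw1).2]
    have h4 : b j < P0 := lt_of_lt_of_le hw2 hw3
    rw [hb j] at h4
    exact (div_lt_iff₀ (mul_pos (hp1 j) (hh0 j))).mp h4
  classical
  obtain ⟨T, hT⟩ : ∃ x, x = (univ.filter fun k => pstar k < Pmax k).erase j := ⟨_, rfl⟩
  have hiT : i ∈ T := by
    rw [hT]; exact mem_erase.mpr ⟨hijne, mem_filter.mpr ⟨mem_univ i, hiP⟩⟩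
  obtain ⟨S, hSdef⟩ : ∃ x, x = ∑ l ∈ T, g l * pstar l := ⟨_, rfl⟩
  have hS : 0 < S := by
    rw [hSdef]
    exact Finset.sum_pos (fun l _ => mul_pos (hg l) (hp1 l)) ⟨i, hiT⟩
  obtain ⟨σ, hσdef⟩ : ∃ x, x = S / g j := ⟨_, rfl⟩
  have hσ : 0 < σ := by rw [hσdef]; exact div_pos hS (hg j)
  have hgσ : g j * σ = S := by
    rw [hσdef, mul_div_assoc']
    exact mul_div_cancel_left₀ S (ne_of_gt (hg j))
  obtain ⟨Ej, hEjdef⟩ : ∃ x, x = ∑ l ∈ univ.erase j, h j l * pstar l := ⟨_, rfl⟩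
  rw [← hEjdef] at haj hbj
  have hEj0 : 0 ≤ Ej := by
    rw [hEjdef]
    exact Finset.sum_nonneg fun l _ => mul_nonneg (hh j l).le (hp1 l).le
  obtain ⟨D, hDdef⟩ : ∃ x, x = Pmax j - pstar j := ⟨_, rfl⟩
  rw [← hDdef] at hbj
  have hD0 : 0 < D := by rw [hDdef]; linarith
  obtain ⟨K1, hK1⟩ : ∃ x, x = Ej + α0 * (h0 j * S) := ⟨_, rfl⟩
  have hK10 : 0 ≤ K1 := by
    have := mul_nonneg hα0 (mul_nonneg (hh0 j).le hS.le); rw [hK1]; linarith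
  obtain ⟨Num1, hNum1⟩ : ∃ x, x = α0 * (g j * pstar j * h0 j) - (Ej + n j) := ⟨_, rfl⟩
  have hNum1pos : 0 < Num1 := by rw [hNum1]; linarith [haj]
  obtain ⟨K2, hK2⟩ : ∃ x, x = D * Ej + σ * (Ej + n j) + σ * Ej + P0 * (h0 j * σ) := ⟨_, rfl⟩
  have hK20 : 0 ≤ K2 := by
    have h1 := mul_nonneg hD0.le hEj0
    have h2 := mul_nonneg hσ.le (by linarith [hn j] : (0:ℝ) ≤ Ej + n j)
    have h3 := mul_nonneg hσ.le hEj0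
    have h4 := mul_nonneg hP0.le (mul_nonneg (hh0 j).le hσ.le)
    rw [hK2]; linarith
  obtain ⟨Num2, hNum2⟩ : ∃ x, x = P0 * (pstar j * h0 j) - D * (Ej + n j) := ⟨_, rfl⟩
  have hNum2pos : 0 < Num2 := by rw [hNum2]; linarith [hbj]
  obtain ⟨B, hB⟩ : ∃ x, x = (univ.sup' ⟨j, mem_univ j⟩ pstar) + σ + 1 := ⟨_, rfl⟩
  have hBp : ∀ k, pstar k < B := by
    intro k
    have := Finset.le_sup' pstar (mem_univ k)
    rw [hB]; linarith [hσ]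
  have hBσ : σ < B := by
    have := Finset.le_sup' pstar (mem_univ j)
    rw [hB]; linarith [hp1 j]
  have hB0 : 0 < B := lt_trans (hp1 j) (hBp j)
  obtain ⟨cT, hcT⟩ : ∃ x, x = T.inf' ⟨i, hiT⟩ (fun k => (Pmax k - pstar k) / pstar k) := ⟨_, rfl⟩
  have hcT0 : 0 < cT := by
    rw [hcT]
    apply (Finset.lt_inf'_iff _).mpr
    intro k hk
    have hk2 : pstar k < Pmax k := by
      rw [hT] at hk
      exact (mem_filter.mp (mem_of_mem_erase hk)).2
    exact div_pos (by linarith) (hp1 k)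
  obtain ⟨c, hc0, hc1, hc2, hc3, hc4, hc5, hc6⟩ :
      ∃ c : ℝ, 0 < c ∧ c ≤ 1 ∧ c ≤ cT ∧ c ≤ pstar j * g j / S ∧
        c ≤ ε / (2 * B) ∧ c ≤ Num1 / (K1 + 1) ∧ c ≤ Num2 / (K2 + 1) := by
    have q1 : (0:ℝ) < pstar j * g j / S := div_pos (mul_pos (hp1 j) (hg j)) hS
    have q2 : (0:ℝ) < ε / (2 * B) := div_pos hε (by linarith)
    have q3 : (0:ℝ) < Num1 / (K1 + 1) := div_pos hNum1pos (by linarith)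
    have q4 : (0:ℝ) < Num2 / (K2 + 1) := div_pos hNum2pos (by linarith)
    refine ⟨min 1 (min cT (min (pstar j * g j / S) (min (ε / (2 * B))
      (min (Num1 / (K1 + 1)) (Num2 / (K2 + 1)))))), ?_, min_le_left _ _, ?_, ?_, ?_, ?_, ?_⟩
    · exact lt_min one_pos (lt_min hcT0 (lt_min q1 (lt_min q2 (lt_min q3 q4))))
    · exact (min_le_right _ _).trans (min_le_left _ _)
    · exact (min_le_right _ _).trans ((min_le_right _ _).trans (min_le_left _ _))
    · exact (min_le_right _ _).trans ((min_le_right _ _).trans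
        ((min_le_right _ _).trans (min_le_left _ _)))
    · exact (min_le_right _ _).trans ((min_le_right _ _).trans
        ((min_le_right _ _).trans ((min_le_right _ _).trans (min_le_left _ _))))
    · exact (min_le_right _ _).trans ((min_le_right _ _).trans
        ((min_le_right _ _).trans ((min_le_right _ _).trans (min_le_right _ _))))
  have hcσ : c * σ ≤ pstar j := by
    have h1 : c * S ≤ pstar j * g j := (le_div_iff₀ hS).mp hc3
    rw [hσdef, mul_div_assoc']
    exact (div_le_iff₀ (hg j)).mpr (by linarith [h1])
  have hc4' : c * B ≤ ε / 2 := by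
    have h1 : c * (2 * B) ≤ ε := (le_div_iff₀ (by linarith)).mp hc4
    linarith
  have hc5' : c * (K1 + 1) ≤ Num1 := (le_div_iff₀ (by linarith)).mp hc5
  have hc6' : c * (K2 + 1) ≤ Num2 := (le_div_iff₀ (by linarith)).mp hc6
  have hc2' : ∀ k, k ∈ T → c * pstar k ≤ Pmax k - pstar k := by
    intro k hk
    have h1 : cT ≤ (Pmax k - pstar k) / pstar k := by
      rw [hcT]; exact Finset.inf'_le _ hk
    exact (le_div_iff₀ (hp1 k)).mp (hc2.trans h1)
  obtain ⟨pt, hpt⟩ : ∃ x : Fin N → ℝ, x = fun k => if k = j then pstar j - c * σ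
    else if pstar k < Pmax k then (1 + c) * pstar k else pstar k := ⟨_, rfl⟩
  have hptj : pt j = pstar j - c * σ := by simp [hpt]
  have hptT : ∀ k, k ≠ j → pstar k < Pmax k → pt k = (1 + c) * pstar k := by
    intro k hk hk2; simp [hpt, hk, hk2]
  have hptO : ∀ k, k ≠ j → ¬ pstar k < Pmax k → pt k = pstar k := by
    intro k hk hk2; simp [hpt, hk, hk2]
  have hptle : ∀ l, pt l ≤ (1 + c) * pstar l := by
    intro l
    by_cases hl : l = j
    · rw [hl, hptj]
      linarith [mul_nonneg hc0.le hσ.le, mul_nonneg hc0.le (hp1 j).le]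
    · by_cases hl2 : pstar l < Pmax l
      · exact (hptT l hl hl2).le
      · rw [hptO l hl hl2]; linarith [mul_nonneg hc0.le (hp1 l).le]
  have hpt0 : ∀ l, 0 ≤ pt l := by
    intro l
    by_cases hl : l = j
    · rw [hl, hptj]; linarith
    · by_cases hl2 : pstar l < Pmax l
      · rw [hptT l hl hl2]; linarith [mul_nonneg hc0.le (hp1 l).le, hp1 l]
      · rw [hptO l hl hl2]; exact (hp1 l).le
  have hptP : ∀ l, pt l ≤ Pmax l := by
    intro l
    by_cases hl : l = j
    · rw [hl, hptj]
      have := mul_nonneg hc0.le hσ.le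
      linarith [hp2 j]
    · by_cases hl2 : pstar l < Pmax l
      · rw [hptT l hl hl2]
        have hmem : l ∈ T := by
          rw [hT]; exact mem_erase.mpr ⟨hl, mem_filter.mpr ⟨mem_univ l, hl2⟩⟩
        have := hc2' l hmem
        linarith
      · rw [hptO l hl hl2]; exact hp2 l
  have hE'le : ∀ k, ∑ l ∈ univ.erase k, h k l * pt l
      ≤ (1 + c) * ∑ l ∈ univ.erase k, h k l * pstar l := by
    intro k
    rw [Finset.mul_sum]
    refine Finset.sum_le_sum fun l _ => ?_
    calc h k l * pt l ≤ h k l * ((1 + c) * pstar l) :=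
          mul_le_mul_of_nonneg_left (hptle l) (hh k l).le
      _ = (1 + c) * (h k l * pstar l) := by ring
  have hFA : ∀ k, pt k < Pmax k →
      (∑ l ∈ univ.erase k, h k l * pt l + n k) ≤ α0 * (g k * h0 k * pt k) := by
    intro k hk
    by_cases hkj : k = j
    · rw [hkj, hptj]
      have h1 := hE'le j
      have h2 : α0 * (g j * h0 j * (pstar j - c * σ))
          = α0 * (g j * pstar j * h0 j) - c * (α0 * (h0 j * S)) := by
        rw [← hgσ]; ring
      rw [h2]
      have h4 : c * K1 = c * Ej + c * (α0 * (h0 j * S)) := by rw [hK1]; ring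
      rw [← hEjdef] at h1
      linarith [hc5', h1, h4, hNum1, hc0.le]
    · have hk2 : pstar k < Pmax k := by
        by_cases hp : pstar k < Pmax k
        · exact hp
        · exfalso; rw [hptO k hkj hp] at hk; exact hp hk
      rw [hptT k hkj hk2]
      have h1 := hE'le k
      have h2 := (key k hk2).1
      have h3 := mul_le_mul_of_nonneg_left h2 hc0.le
      have h4 := mul_nonneg hc0.le (hn k).le
      have h5 : α0 * (g k * h0 k * ((1 + c) * pstar k))
          = (1 + c) * (α0 * (g k * h0 k * pstar k)) := by ring
      linarith [h1, h2, h3, h4, h5]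
  have hFB : ∀ k, pt k < Pmax k →
      (Pmax k - pt k) * (∑ l ∈ univ.erase k, h k l * pt l + n k)
        ≤ P0 * (h0 k * pt k) := by
    intro k hk
    have hE'0 : 0 ≤ ∑ l ∈ univ.erase k, h k l * pt l :=
      Finset.sum_nonneg fun l _ => mul_nonneg (hh k l).le (hpt0 l)
    by_cases hkj : k = j
    · rw [hkj, hptj]
      have h1 := hE'le j
      rw [← hEjdef] at h1
      have hDc : Pmax j - (pstar j - c * σ) = D + c * σ := by rw [hDdef]; ring
      rw [hDc]
      have hDc0 : (0:ℝ) ≤ D + c * σ := by linarith [hD0, mul_nonneg hc0.le hσ.le]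
      have hIle : (∑ l ∈ univ.erase j, h j l * pt l + n j) ≤ (Ej + n j) + c * Ej := by
        linarith
      have hmul : (D + c * σ) * (∑ l ∈ univ.erase j, h j l * pt l + n j)
          ≤ (D + c * σ) * ((Ej + n j) + c * Ej) :=
        mul_le_mul_of_nonneg_left hIle hDc0
      have hcc : c * c ≤ c := by
        have := mul_le_mul_of_nonneg_left hc1 hc0.le
        linarith
      have h5 : c * c * (σ * Ej) ≤ c * (σ * Ej) :=
        mul_le_mul_of_nonneg_right hcc (mul_nonneg hσ.le hEj0)
      have hRHS : P0 * (h0 j * (pstar j - c * σ))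
          = P0 * (pstar j * h0 j) - c * (P0 * (h0 j * σ)) := by ring
      have hcK2 : c * K2 = c * (D * Ej) + c * (σ * (Ej + n j)) + c * (σ * Ej)
          + c * (P0 * (h0 j * σ)) := by rw [hK2]; ring
      rw [hRHS]
      linarith [hmul, hc6', h5, hcK2, hNum2, hc0.le]
    · have hk2 : pstar k < Pmax k := by
        by_cases hp : pstar k < Pmax k
        · exact hp
        · exfalso; rw [hptO k hkj hp] at hk; exact hp hk
      rw [hptT k hkj hk2]
      have h1 := hE'le k
      have h2 := (key k hk2).2
      have hE0 : 0 ≤ ∑ l ∈ univ.erase k, h k l * pstar l :=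
        Finset.sum_nonneg fun l _ => mul_nonneg (hh k l).le (hp1 l).le
      have hIle : ∑ l ∈ univ.erase k, h k l * pt l + n k
          ≤ (1 + c) * (∑ l ∈ univ.erase k, h k l * pstar l + n k) := by
        linarith [h1, mul_nonneg hc0.le (hn k).le]
      rcases le_or_gt (Pmax k) ((1 + c) * pstar k) with hcase | hcase
      · have hL : (Pmax k - (1 + c) * pstar k)
            * (∑ l ∈ univ.erase k, h k l * pt l + n k) ≤ 0 :=
          mul_nonpos_of_nonpos_of_nonneg (by linarith) (by linarith [hn k])
        have hR : 0 ≤ P0 * (h0 k * ((1 + c) * pstar k)) :=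
          mul_nonneg hP0.le (mul_nonneg (hh0 k).le
            (by linarith [mul_nonneg hc0.le (hp1 k).le, hp1 k]))
        linarith
      · have h6 : (Pmax k - (1 + c) * pstar k)
            * (∑ l ∈ univ.erase k, h k l * pt l + n k)
            ≤ (Pmax k - (1 + c) * pstar k)
              * ((1 + c) * (∑ l ∈ univ.erase k, h k l * pstar l + n k)) :=
          mul_le_mul_of_nonneg_left hIle (by linarith)
        have h7 : (Pmax k - (1 + c) * pstar k)
              * ((1 + c) * (∑ l ∈ univ.erase k, h k l * pstar l + n k))
            ≤ (Pmax k - pstar k)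
              * ((1 + c) * (∑ l ∈ univ.erase k, h k l * pstar l + n k)) :=
          mul_le_mul_of_nonneg_right
            (by linarith [mul_nonneg hc0.le (hp1 k).le])
            (mul_nonneg (by linarith) (by linarith [hn k]))
        have h8 : (1 + c) * ((Pmax k - pstar k)
              * (∑ l ∈ univ.erase k, h k l * pstar l + n k))
            ≤ (1 + c) * (P0 * (h0 k * pstar k)) :=
          mul_le_mul_of_nonneg_left h2 (by linarith)
        have h9 : P0 * (h0 k * ((1 + c) * pstar k))
            = (1 + c) * (P0 * (h0 k * pstar k)) := by ring
        linarith [h6, h7, h8, h9]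
  have hagg : ∑ k, g k * pt k = ∑ k, g k * pstar k := by
    have hsplit : ∀ k, g k * pt k - g k * pstar k
        = (if k = j then -(c * S)
            else if pstar k < Pmax k then c * (g k * pstar k) else 0) := by
      intro k
      by_cases hk : k = j
      · rw [hk, hptj, if_pos (rfl : j = j), ← hgσ]; ring
      · by_cases hk2 : pstar k < Pmax k
        · rw [hptT k hk hk2]; simp only [if_neg hk, if_pos hk2]; ring
        · rw [hptO k hk hk2]; simp only [if_neg hk, if_neg hk2]; ring
    have h1 : ∑ k, (g k * pt k - g k * pstar k) = 0 := by
      rw [Finset.sum_congr rfl fun k _ => hsplit k,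
        ← Finset.sum_erase_add univ _ (mem_univ j)]
      rw [if_pos (rfl : j = j)]
      have h2 : ∑ k ∈ univ.erase j, (if k = j then -(c * S)
          else if pstar k < Pmax k then c * (g k * pstar k) else 0)
          = ∑ k ∈ T, c * (g k * pstar k) := by
        rw [Finset.sum_congr rfl (fun k hk => by
          rw [if_neg (mem_erase.mp hk).1]),
          ← Finset.sum_filter, hT, Finset.filter_erase]
      rw [h2, ← Finset.mul_sum, ← hSdef]
      ring
    rw [Finset.sum_sub_distrib] at h1
    linarith
  have hne : pt ≠ pstar := by
    intro hcon
    have h1 := congrFun hcon i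
    rw [hptT i hijne hiP] at h1
    linarith [mul_pos hc0 (hp1 i)]
  have hclose : ∀ k, |pt k - pstar k| < ε := by
    intro k
    by_cases hk : k = j
    · rw [hk, hptj, show pstar j - c * σ - pstar j = -(c * σ) by ring, abs_neg,
        abs_of_nonneg (mul_nonneg hc0.le hσ.le)]
      have := mul_lt_mul_of_pos_left hBσ hc0
      linarith
    · by_cases hk2 : pstar k < Pmax k
      · rw [hptT k hk hk2, show (1 + c) * pstar k - pstar k = c * pstar k by ring,
          abs_of_nonneg (mul_nonneg hc0.le (hp1 k).le)]
        have := mul_lt_mul_of_pos_left (hBp k) hc0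
        linarith
      · rw [hptO k hk hk2]; simpa using hε
  exact ⟨pt, hne, fun k => ⟨hpt0 k, hptP k⟩,
    isNE_of_conds h h0 n g Pmax pstar hh hh0 hg hn α0 P0 hα0 hP0 pt hpt0 hagg hFA hFB,
    hagg, hclose⟩
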